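/- Let A be a commutative ℚ-algebra with derivation d, let N ≥ 1 and k ≥ 1, and let z̄ ∈ A[w,w⁻¹] have support contained in {−1, 0, …, N}. Set H̄_k := (z̄^k)₋ + (1/2)·(z̄^k)₀. Then {H̄_k, z̄} has support contained in {−1, …, N}; i.e., the t̄_k-flows preserve the polynomial reduction of z̄. -/

import Mathlib

open LaurentPolynomial

/-- The derivation `d : A → A` extended coefficientwise to Laurent polynomials
(so that `d w = 0`). -/
noncomputable def dmap {A : Type*} [CommRing A] (d : A → A) (f : LaurentPolynomial A) :
    LaurentPolynomial A :=
  f.coeff.sum fun n a => C (d a) * T n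

/-- The formal derivative `∂_w` on Laurent polynomials. -/
noncomputable def wderiv {A : Type*} [CommRing A] (f : LaurentPolynomial A) :
    LaurentPolynomial A :=
  f.coeff.sum fun n a => C (n • a) * T (n - 1)

/-- The Lax–Poisson bracket `{f,g} = w·(∂_w f)·(d g) − w·(d f)·(∂_w g)`. -/
noncomputable def lax {A : Type*} [CommRing A] (d : A → A) (f g : LaurentPolynomial A) :
    LaurentPolynomial A :=
  T 1 * wderiv f * dmap d g - T 1 * dmap d f * wderiv g

/-- `f₊`, the strictly positive-degree part of a Laurent polynomial. -/
noncomputable def posPart {A : Type*} [CommRing A] (f : LaurentPolynomial A) :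
    LaurentPolynomial A :=
  f.coeff.sum fun n a => if 0 < n then C a * T n else 0

/-- `f₋`, the strictly negative-degree part of a Laurent polynomial. -/
noncomputable def negPart {A : Type*} [CommRing A] (f : LaurentPolynomial A) :
    LaurentPolynomial A :=
  f.coeff.sum fun n a => if n < 0 then C a * T n else 0

section Aux

variable {A : Type*} [CommRing A] (d : A → A)

theorem CT_mul_CT (n m : ℤ) (a b : A) :
    (C a * T n) * (C b * T m) = (C (a * b) * T (n + m) : LaurentPolynomial A) := by
  rw [← single_eq_C_mul_T, ← single_eq_C_mul_T, ← single_eq_C_mul_T]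
  exact AddMonoidAlgebra.single_mul_single _ _ _ _

theorem dmap_CT (hd0 : d 0 = 0) (n : ℤ) (a : A) :
    dmap d (C a * T n) = C (d a) * T n := by
  unfold dmap
  rw [← single_eq_C_mul_T, AddMonoidAlgebra.coeff_single, Finsupp.sum_single_index]
  simp [hd0]

theorem wderiv_CT (n : ℤ) (a : A) :
    wderiv (C a * T n : LaurentPolynomial A) = C (n • a) * T (n - 1) := by
  unfold wderiv
  rw [← single_eq_C_mul_T, AddMonoidAlgebra.coeff_single, Finsupp.sum_single_index]
  simp

theorem dmap_zero (hd0 : d 0 = 0) : dmap d (0 : LaurentPolynomial A) = 0 := by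
  unfold dmap; simp

theorem wderiv_zero : wderiv (0 : LaurentPolynomial A) = 0 := by
  unfold wderiv; simp

theorem dmap_add (hd0 : d 0 = 0) (hd_add : ∀ a b : A, d (a + b) = d a + d b)
    (f g : LaurentPolynomial A) : dmap d (f + g) = dmap d f + dmap d g := by
  unfold dmap
  rw [AddMonoidAlgebra.coeff_add]
  exact Finsupp.sum_add_index' (fun n => by simp [hd0]) (fun n a b => by
    rw [hd_add, map_add, add_mul])

theorem wderiv_add (f g : LaurentPolynomial A) : wderiv (f + g) = wderiv f + wderiv g := by
  unfold wderiv
  rw [AddMonoidAlgebra.coeff_add]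
  exact Finsupp.sum_add_index' (fun n => by simp) (fun n a b => by
    rw [smul_add, map_add, add_mul])

theorem dmap_mul (hd0 : d 0 = 0) (hd_add : ∀ a b : A, d (a + b) = d a + d b)
    (hd_mul : ∀ a b : A, d (a * b) = a * d b + d a * b)
    (f g : LaurentPolynomial A) : dmap d (f * g) = dmap d f * g + f * dmap d g := by
  induction f using AddMonoidAlgebra.induction_linear with
  | zero => simp [dmap_zero d hd0]
  | add p q hp hq =>
    rw [add_mul, dmap_add d hd0 hd_add, dmap_add d hd0 hd_add, hp, hq]; ring
  | single n a =>
    induction g using AddMonoidAlgebra.induction_linear with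
    | zero => simp [dmap_zero d hd0]
    | add p q hp hq =>
      rw [mul_add, dmap_add d hd0 hd_add, dmap_add d hd0 hd_add, hp, hq]; ring
    | single m b =>
      rw [single_eq_C_mul_T, single_eq_C_mul_T, CT_mul_CT, dmap_CT d hd0, dmap_CT d hd0,
        dmap_CT d hd0, CT_mul_CT, CT_mul_CT, hd_mul, map_add, add_mul]
      ring_nf

theorem wderiv_mul (f g : LaurentPolynomial A) :
    wderiv (f * g) = wderiv f * g + f * wderiv g := by
  induction f using AddMonoidAlgebra.induction_linear with
  | zero => simp [wderiv_zero]
  | add p q hp hq =>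
    rw [add_mul, wderiv_add, wderiv_add, hp, hq]; ring
  | single n a =>
    induction g using AddMonoidAlgebra.induction_linear with
    | zero => simp [wderiv_zero]
    | add p q hp hq =>
      rw [mul_add, wderiv_add, wderiv_add, hp, hq]; ring
    | single m b =>
      rw [single_eq_C_mul_T, single_eq_C_mul_T, CT_mul_CT, wderiv_CT, wderiv_CT, wderiv_CT,
        CT_mul_CT, CT_mul_CT]
      have h1 : n - 1 + m = n + m - 1 := by ring
      have h2 : n + (m - 1) = n + m - 1 := by ring
      rw [h1, h2, ← add_mul, ← map_add]
      congr 2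
      rw [add_smul, smul_mul_assoc, mul_smul_comm]

theorem lax_add_left (hd0 : d 0 = 0) (hd_add : ∀ a b : A, d (a + b) = d a + d b)
    (f g h : LaurentPolynomial A) : lax d (f + g) h = lax d f h + lax d g h := by
  unfold lax
  rw [wderiv_add, dmap_add d hd0 hd_add]; ring

theorem lax_self (f : LaurentPolynomial A) : lax d f f = 0 := by
  unfold lax; ring

theorem lax_mul_left (hd0 : d 0 = 0) (hd_add : ∀ a b : A, d (a + b) = d a + d b)
    (hd_mul : ∀ a b : A, d (a * b) = a * d b + d a * b)
    (f g h : LaurentPolynomial A) :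
    lax d (f * g) h = f * lax d g h + g * lax d f h := by
  unfold lax
  rw [wderiv_mul, dmap_mul d hd0 hd_add hd_mul]; ring

theorem lax_pow_self (hd0 : d 0 = 0) (hd_add : ∀ a b : A, d (a + b) = d a + d b)
    (hd_mul : ∀ a b : A, d (a * b) = a * d b + d a * b)
    (f : LaurentPolynomial A) (k : ℕ) : lax d (f ^ (k + 1)) f = 0 := by
  induction k with
  | zero => simpa using lax_self d f
  | succ k ih =>
    rw [pow_succ, lax_mul_left d hd0 hd_add hd_mul, ih, lax_self d f]
    simp

end Aux

open Pointwise

section Aux2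

variable {A : Type*} [CommRing A] (d : A → A)

theorem coeff_negPart (f : LaurentPolynomial A) (m : ℤ) :
    (_root_.negPart f).coeff m = if m < 0 then f.coeff m else 0 := by
  classical
  unfold _root_.negPart
  rw [AddMonoidAlgebra.coeff_finsuppSum, Finsupp.sum_apply]
  have h : (f.coeff.sum fun n a => ((if n < 0 then C a * T n else 0) : LaurentPolynomial A).coeff m)
      = f.coeff.sum fun n a => if n = m then (if n < 0 then a else 0) else 0 := by
    apply Finsupp.sum_congr
    intro n _
    by_cases h1 : n < 0
    · simp only [h1, if_true, ← single_eq_C_mul_T, AddMonoidAlgebra.coeff_single, Finsupp.single_apply]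
    · simp [h1]
  rw [h, Finsupp.sum_ite_eq']
  by_cases hm : m ∈ f.coeff.support
  · simp [hm]
  · simp [hm, Finsupp.notMem_support_iff.mp hm]

theorem coeff_posPart (f : LaurentPolynomial A) (m : ℤ) :
    (_root_.posPart f).coeff m = if 0 < m then f.coeff m else 0 := by
  classical
  unfold _root_.posPart
  rw [AddMonoidAlgebra.coeff_finsuppSum, Finsupp.sum_apply]
  have h : (f.coeff.sum fun n a => ((if 0 < n then C a * T n else 0) : LaurentPolynomial A).coeff m)
      = f.coeff.sum fun n a => if n = m then (if 0 < n then a else 0) else 0 := by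
    apply Finsupp.sum_congr
    intro n _
    by_cases h1 : 0 < n
    · simp only [h1, if_true, ← single_eq_C_mul_T, AddMonoidAlgebra.coeff_single, Finsupp.single_apply]
    · simp [h1]
  rw [h, Finsupp.sum_ite_eq']
  by_cases hm : m ∈ f.coeff.support
  · simp [hm]
  · simp [hm, Finsupp.notMem_support_iff.mp hm]

theorem part_decomp (f : LaurentPolynomial A) :
    _root_.negPart f + _root_.posPart f + C (f.coeff 0) = f := by
  have hC : (C (f.coeff 0) : LaurentPolynomial A) = AddMonoidAlgebra.single 0 (f.coeff 0) := by
    rw [single_eq_C_mul_T, T_zero, mul_one]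
  ext m
  rw [AddMonoidAlgebra.coeff_add, AddMonoidAlgebra.coeff_add, Finsupp.add_apply, Finsupp.add_apply, coeff_negPart, coeff_posPart, hC,
    AddMonoidAlgebra.coeff_single, Finsupp.single_apply]
  rcases lt_trichotomy m 0 with h | h | h
  · rw [if_pos h, if_neg (show ¬ (0:ℤ) < m by omega), if_neg (show (0:ℤ) ≠ m by omega),
      add_zero, add_zero]
  · subst h
    simp
  · rw [if_neg (show ¬ m < (0:ℤ) by omega), if_pos h, if_neg (show (0:ℤ) ≠ m by omega),
      zero_add, add_zero]

theorem support_dmap (hd0 : d 0 = 0) (f : LaurentPolynomial A) :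
    (dmap d f).coeff.support ⊆ f.coeff.support := by
  classical
  unfold dmap
  rw [AddMonoidAlgebra.coeff_finsuppSum]
  refine Finsupp.support_sum.trans (Finset.biUnion_subset.mpr fun n hn => ?_)
  rw [← single_eq_C_mul_T, AddMonoidAlgebra.coeff_single]
  exact Finsupp.support_single_subset.trans (Finset.singleton_subset_iff.mpr hn)

theorem support_T_one_mul_wderiv (f : LaurentPolynomial A) :
    ((T 1 : LaurentPolynomial A) * wderiv f).coeff.support ⊆ f.coeff.support := by
  classical
  unfold wderiv
  rw [Finsupp.mul_sum, AddMonoidAlgebra.coeff_finsuppSum]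
  refine Finsupp.support_sum.trans (Finset.biUnion_subset.mpr fun n hn => ?_)
  have h : (T 1 : LaurentPolynomial A) * (C (n • f.coeff n) * T (n - 1)) = C (n • f.coeff n) * T n := by
    rw [mul_comm, mul_T_assoc, sub_add_cancel]
  rw [h, ← single_eq_C_mul_T, AddMonoidAlgebra.coeff_single]
  exact Finsupp.support_single_subset.trans (Finset.singleton_subset_iff.mpr hn)

theorem support_lax (hd0 : d 0 = 0) (f g : LaurentPolynomial A) :
    (lax d f g).coeff.support ⊆ f.coeff.support + g.coeff.support := by
  classical
  have h : lax d f g = (T 1 * wderiv f) * dmap d g - dmap d f * (T 1 * wderiv g) := by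
    unfold lax; ring
  rw [h, AddMonoidAlgebra.coeff_sub]
  refine Finsupp.support_sub.trans (Finset.union_subset ?_ ?_)
  · exact (AddMonoidAlgebra.support_coeff_mul_subset _ _).trans
      (Finset.add_subset_add (support_T_one_mul_wderiv f) (support_dmap d hd0 g))
  · exact (AddMonoidAlgebra.support_coeff_mul_subset _ _).trans
      (Finset.add_subset_add (support_dmap d hd0 f) (support_T_one_mul_wderiv g))

theorem support_posPart (f : LaurentPolynomial A) :
    (_root_.posPart f).coeff.support ⊆ f.coeff.support.filter (fun n => 0 < n) := by
  classical
  unfold _root_.posPart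
  rw [AddMonoidAlgebra.coeff_finsuppSum]
  refine Finsupp.support_sum.trans (Finset.biUnion_subset.mpr fun n hn => ?_)
  by_cases h : 0 < n
  · rw [if_pos h, ← single_eq_C_mul_T, AddMonoidAlgebra.coeff_single]
    exact Finsupp.support_single_subset.trans (by simp [Finset.singleton_subset_iff, hn, h])
  · rw [if_neg h]; simp

theorem support_negPart (f : LaurentPolynomial A) :
    (_root_.negPart f).coeff.support ⊆ f.coeff.support.filter (fun n => n < 0) := by
  classical
  unfold _root_.negPart
  rw [AddMonoidAlgebra.coeff_finsuppSum]
  refine Finsupp.support_sum.trans (Finset.biUnion_subset.mpr fun n hn => ?_)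
  by_cases h : n < 0
  · rw [if_pos h, ← single_eq_C_mul_T, AddMonoidAlgebra.coeff_single]
    exact Finsupp.support_single_subset.trans (by simp [Finset.singleton_subset_iff, hn, h])
  · rw [if_neg h]; simp

theorem support_pow_subset (f : LaurentPolynomial A) (a b : ℤ) (hf : f.coeff.support ⊆ Finset.Icc a b)
    (k : ℕ) : (f ^ (k + 1)).coeff.support ⊆ Finset.Icc ((k + 1 : ℤ) * a) ((k + 1 : ℤ) * b) := by
  classical
  induction k with
  | zero => simpa using hf
  | succ k ih =>
    rw [pow_succ]
    refine (AddMonoidAlgebra.support_coeff_mul_subset _ _).trans ?_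
    refine (Finset.add_subset_add ih hf).trans ?_
    refine (Finset.Icc_add_Icc_subset _ _ _ _).trans ?_
    apply Finset.Icc_subset_Icc <;> (apply le_of_eq; push_cast; ring)

theorem support_C_subset (a : A) : (C a : LaurentPolynomial A).coeff.support ⊆ {0} := by
  have hC : (C a : LaurentPolynomial A) = AddMonoidAlgebra.single 0 a := by
    rw [single_eq_C_mul_T, T_zero, mul_one]
  rw [hC, AddMonoidAlgebra.coeff_single]
  exact Finsupp.support_single_subset

end Aux2

/-- the `t̄_k`-flows preserve the polynomial reduction of `z̄`:
if `z̄` has support in `{−1,…,N}` and `H̄_k = (z̄^k)₋ + (1/2)(z̄^k)₀` then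
`{H̄_k, z̄}` has support in `{−1,…,N}`. -/
theorem tbar_flow_preserves_poly_reduction_of_zbar {A : Type*} [CommRing A] [Algebra ℚ A]
    (d : A → A)
    (hd_add : ∀ a b : A, d (a + b) = d a + d b)
    (hd_mul : ∀ a b : A, d (a * b) = a * d b + d a * b)
    (N k : ℕ) (hN : 1 ≤ N) (hk : 1 ≤ k)
    (zbar : LaurentPolynomial A)
    (hzbar : zbar.coeff.support ⊆ Finset.Icc (-1 : ℤ) (N : ℤ))
    (Hbk : LaurentPolynomial A)
    (hHbk : Hbk = negPart (zbar ^ k) + C ((1/2 : ℚ) • ((zbar ^ k).coeff (0 : ℤ)))) :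
    (lax d Hbk zbar).coeff.support ⊆ Finset.Icc (-1 : ℤ) (N : ℤ) := by
  classical
  have hd0 : d 0 = 0 := by
    have h := hd_add 0 0
    rw [add_zero] at h
    exact (left_eq_add.mp h)
  obtain ⟨k', rfl⟩ : ∃ k', k = k' + 1 := ⟨k - 1, (Nat.succ_pred_eq_of_pos hk).symm⟩
  set k := k' + 1 with hkdef
  set c : A := (zbar ^ k).coeff 0 with hc
  set Q : LaurentPolynomial A := _root_.posPart (zbar ^ k) + C ((1/2 : ℚ) • c) with hQ
  -- decomposition
  have hcc : (C ((1/2 : ℚ) • c) : LaurentPolynomial A) + C ((1/2 : ℚ) • c) = C c := by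
    rw [← map_add]
    congr 1
    rw [← add_smul]
    norm_num
  have hsum : Hbk + Q = zbar ^ k := by
    rw [hHbk, hQ]
    calc _root_.negPart (zbar ^ k) + C ((1/2 : ℚ) • c) + (_root_.posPart (zbar ^ k) + C ((1/2 : ℚ) • c))
        = _root_.negPart (zbar ^ k) + _root_.posPart (zbar ^ k)
          + ((C ((1/2 : ℚ) • c) : LaurentPolynomial A) + C ((1/2 : ℚ) • c)) := by ring
      _ = _root_.negPart (zbar ^ k) + _root_.posPart (zbar ^ k) + C c := by rw [hcc]
      _ = zbar ^ k := part_decomp _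
  have hlax0 : lax d (zbar ^ k) zbar = 0 := lax_pow_self d hd0 hd_add hd_mul zbar k'
  have hHQ : lax d Hbk zbar = - lax d Q zbar := by
    have h := lax_add_left d hd0 hd_add Hbk Q zbar
    rw [hsum, hlax0] at h
    exact eq_neg_of_add_eq_zero_left h.symm
  -- support of zbar ^ k
  have hsuppk : (zbar ^ k).coeff.support ⊆ Finset.Icc (-(k : ℤ)) ((k : ℤ) * N) := by
    have h := support_pow_subset zbar (-1) (N : ℤ) hzbar k'
    have e1 : ((k' : ℤ) + 1) * (-1) = -(k : ℤ) := by push_cast [hkdef]; ring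
    have e2 : ((k' : ℤ) + 1) * (N : ℤ) = (k : ℤ) * N := by push_cast [hkdef]; ring
    rwa [e1, e2] at h
  -- support of Hbk
  have hH : Hbk.coeff.support ⊆ Finset.Icc (-(k : ℤ)) 0 := by
    rw [hHbk, AddMonoidAlgebra.coeff_add]
    refine Finsupp.support_add.trans (Finset.union_subset ?_ ?_)
    · refine (support_negPart _).trans ?_
      intro m hm
      rw [Finset.mem_filter] at hm
      obtain ⟨hm1, hm2⟩ := hm
      have := hsuppk hm1
      rw [Finset.mem_Icc] at this ⊢
      exact ⟨this.1, hm2.le⟩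
    · refine (support_C_subset _).trans ?_
      intro m hm
      rw [Finset.mem_singleton] at hm
      subst hm
      rw [Finset.mem_Icc]
      constructor <;> simp
  -- support of Q
  have hQs : Q.coeff.support ⊆ Finset.Icc 0 ((k : ℤ) * N) := by
    rw [hQ, AddMonoidAlgebra.coeff_add]
    refine Finsupp.support_add.trans (Finset.union_subset ?_ ?_)
    · refine (support_posPart _).trans ?_
      intro m hm
      rw [Finset.mem_filter] at hm
      obtain ⟨hm1, hm2⟩ := hm
      have := hsuppk hm1
      rw [Finset.mem_Icc] at this ⊢
      exact ⟨hm2.le, this.2⟩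
    · refine (support_C_subset _).trans ?_
      intro m hm
      rw [Finset.mem_singleton] at hm
      subst hm
      rw [Finset.mem_Icc]
      constructor
      · exact le_refl 0
      · positivity
  have h1 : (lax d Hbk zbar).coeff.support ⊆ Finset.Icc (-(k : ℤ) + (-1)) (0 + (N : ℤ)) :=
    (support_lax d hd0 Hbk zbar).trans
      ((Finset.add_subset_add hH hzbar).trans (Finset.Icc_add_Icc_subset _ _ _ _))
  have h2 : (lax d Q zbar).coeff.support ⊆ Finset.Icc (0 + (-1 : ℤ)) ((k : ℤ) * N + (N : ℤ)) :=
    (support_lax d hd0 Q zbar).trans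
      ((Finset.add_subset_add hQs hzbar).trans (Finset.Icc_add_Icc_subset _ _ _ _))
  intro m hm
  have hm1 := h1 hm
  have hm2 : m ∈ Finset.Icc (0 + (-1 : ℤ)) ((k : ℤ) * N + (N : ℤ)) := by
    rw [hHQ, AddMonoidAlgebra.coeff_neg, Finsupp.support_neg] at hm
    exact h2 hm
  rw [Finset.mem_Icc] at hm1 hm2 ⊢
  constructor
  · linarith [hm2.1]
  · linarith [hm1.2]
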